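/- Under the same hypotheses (detailed balance equilibrium r, γ = max_i Σ_j C_{ij}, normalized coefficients), for every edge i ~ j: γ^{-2-2δ} ≤ C_{ij} C_{ji} / (r_i^δ R_i r_j^δ R_j) ≤ 1, i.e., the matrix entries ℓ_{ij} = sqrt(C_{ij}C_{ji}/(R_i r_i^δ R_j r_j^δ)) satisfy γ^{-1-δ} ≤ ℓ_{ij} ≤ 1 on edges. -/

import Mathlib

open Finset

/-- `l` is a walk in the support graph of `C`. -/
def isWalk {n : ℕ} (C : Matrix (Fin n) (Fin n) ℝ) (l : List (Fin n)) : Prop :=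
  l.Chain' fun a b => 0 < C a b

theorem ell_entry_bounds {n : ℕ} (hn : 2 ≤ n)
    (C : Matrix (Fin n) (Fin n) ℝ) (δ : ℝ) (hδ : 0 < δ)
    (hCnn : ∀ i j, 0 ≤ C i j)
    (hCsupp : ∀ i j, 0 < C i j ↔ 0 < C j i)
    -- row-minimum normalization: nonzero entries are ≥ 1 and some entry equals 1
    (hnorm : ∀ i, (∀ j, C i j ≠ 0 → 1 ≤ C i j) ∧ ∃ j, C i j = 1)
    -- connectedness
    (hconn : ∀ i j : Fin n, Relation.ReflTransGen (fun a b => 0 < C a b) i j)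
    -- circulation-free
    (hcirc : ∀ l : List (Fin n), l ≠ [] → isWalk C l → l.head? = l.getLast? →
      ((l.zip l.tail).map fun p => C p.1 p.2).prod
        = ((l.zip l.tail).map fun p => C p.2 p.1).prod)
    (r : Fin n → ℝ) (hr : ∀ i, 0 < r i)
    (R : Fin n → ℝ) (hR : ∀ i, R i = ∑ k, C i k / r k ^ δ)
    -- detailed balance
    (hdb : ∀ i j, r i ^ (1 + δ) * C i j / R i = r j ^ (1 + δ) * C j i / R j)
    (γ : ℝ)
    (hγ : γ = Finset.univ.sup' ⟨(⟨0, by omega⟩ : Fin n), Finset.mem_univ _⟩ fun i => ∑ j, C i j) :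
    ∀ i j, 0 < C i j →
      (γ ^ (-2 - 2 * δ) ≤ C i j * C j i / (r i ^ δ * R i * (r j ^ δ * R j)) ∧
        C i j * C j i / (r i ^ δ * R i * (r j ^ δ * R j)) ≤ 1) ∧
      (γ ^ (-1 - δ) ≤ Real.sqrt (C i j * C j i / (R i * r i ^ δ * (R j * r j ^ δ))) ∧
        Real.sqrt (C i j * C j i / (R i * r i ^ δ * (R j * r j ^ δ))) ≤ 1) := by
  have h1δ : (0:ℝ) < 1 + δ := by linarith
  have hθ0 : (0:ℝ) < δ / (1 + δ) := by positivity
  have hθ1 : δ / (1 + δ) < 1 := by rw [div_lt_one h1δ]; linarith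
  have hRpos : ∀ i, 0 < R i := by
    intro i
    obtain ⟨j, hj⟩ := (hnorm i).2
    rw [hR]
    refine Finset.sum_pos' (fun k _ => div_nonneg (hCnn i k)
      (Real.rpow_nonneg (hr k).le δ)) ⟨j, Finset.mem_univ j, ?_⟩
    rw [hj]
    exact div_pos one_pos (Real.rpow_pos_of_pos (hr j) δ)
  have hrow : ∀ i, ∑ j, C i j ≤ γ := by
    intro i
    rw [hγ]
    exact Finset.le_sup' (f := fun i => ∑ j, C i j) (Finset.mem_univ i)
  have hγ1 : (1:ℝ) ≤ γ := by
    obtain ⟨j0, hj0⟩ := (hnorm ⟨0, by omega⟩).2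
    calc (1:ℝ) = C ⟨0, by omega⟩ j0 := hj0.symm
      _ ≤ ∑ j, C ⟨0, by omega⟩ j :=
          Finset.single_le_sum (fun k _ => hCnn _ k) (Finset.mem_univ j0)
      _ ≤ γ := hrow _
  have hγ0 : (0:ℝ) < γ := lt_of_lt_of_le one_pos hγ1
  have hterm0 : ∀ i k, C i k / r k ^ δ ≤ R i := by
    intro i k
    rw [hR]
    exact Finset.single_le_sum (fun m _ => div_nonneg (hCnn i m)
      (Real.rpow_nonneg (hr m).le δ)) (Finset.mem_univ k)
  -- key neighbor bound from detailed balance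
  have key : ∀ i k, 0 < C i k → r i * C i k / R i ≤ r k ^ (1 + δ) := by
    intro i k hik
    have hki : 0 < C k i := (hCsupp i k).1 hik
    have hRk : C k i ≤ R k * r i ^ δ := (div_le_iff₀ (Real.rpow_pos_of_pos (hr i) δ)).1 (hterm0 k i)
    have hdb' := hdb i k
    have hrk : (0:ℝ) < r k ^ (1 + δ) := Real.rpow_pos_of_pos (hr k) _
    have h2 : r k ^ (1 + δ) * C k i / R k ≤ r k ^ (1 + δ) * r i ^ δ := by
      rw [div_le_iff₀ (hRpos k)]
      calc r k ^ (1 + δ) * C k i ≤ r k ^ (1 + δ) * (R k * r i ^ δ) :=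
            mul_le_mul_of_nonneg_left hRk hrk.le
        _ = r k ^ (1 + δ) * r i ^ δ * R k := by ring
    have h3 : r i ^ (1 + δ) * C i k / R i ≤ r k ^ (1 + δ) * r i ^ δ := hdb' ▸ h2
    have hri : r i ^ (1 + δ) = r i * r i ^ δ := by
      rw [Real.rpow_add (hr i), Real.rpow_one]
    have h4 : r i * C i k / R i * r i ^ δ ≤ r k ^ (1 + δ) * r i ^ δ := by
      calc r i * C i k / R i * r i ^ δ = r i * r i ^ δ * C i k / R i := by ring
        _ = r i ^ (1 + δ) * C i k / R i := by rw [hri]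
        _ ≤ r k ^ (1 + δ) * r i ^ δ := h3
    exact le_of_mul_le_mul_right h4 (Real.rpow_pos_of_pos (hr i) δ)
  -- the main bound : r i ^ δ * R i ≤ γ ^ (1+δ)
  have hg : ∀ i, r i ^ δ * R i ≤ γ ^ (1 + δ) := by
    intro i
    set θ : ℝ := δ / (1 + δ) with hθdef
    set g : ℝ := r i ^ δ * R i with hgdef
    have hgpos : 0 < g := mul_pos (Real.rpow_pos_of_pos (hr i) δ) (hRpos i)
    have hterm : ∀ k, C i k / r k ^ δ ≤ C i k ^ ((1:ℝ)/(1+δ)) * (R i / r i) ^ θ := by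
      intro k
      rcases eq_or_lt_of_le (hCnn i k) with h0 | hik
      · rw [← h0]
        rw [Real.zero_rpow (by positivity : (1:ℝ)/(1+δ) ≠ 0)]
        norm_num
      · have hbase : (0:ℝ) < r i * C i k / R i :=
          div_pos (mul_pos (hr i) hik) (hRpos i)
        have h3 : (r i * C i k / R i) ^ θ ≤ r k ^ δ := by
          calc (r i * C i k / R i) ^ θ ≤ (r k ^ (1 + δ)) ^ θ :=
                Real.rpow_le_rpow hbase.le (key i k hik) hθ0.le
            _ = r k ^ δ := by
                rw [← Real.rpow_mul (hr k).le]
                congr 1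
                rw [hθdef, mul_comm, div_mul_cancel₀ δ h1δ.ne']
        have h4 : C i k / r k ^ δ ≤ C i k / (r i * C i k / R i) ^ θ :=
          div_le_div_of_nonneg_left hik.le (Real.rpow_pos_of_pos hbase θ) h3
        have h5 : C i k / (r i * C i k / R i) ^ θ
            = C i k ^ ((1:ℝ)/(1+δ)) * (R i / r i) ^ θ := by
          have hri : (0:ℝ) ≤ r i / R i := div_nonneg (hr i).le (hRpos i).le
          rw [show r i * C i k / R i = C i k * (r i / R i) by ring,
            Real.mul_rpow hik.le hri, div_mul_eq_div_div, div_eq_mul_inv,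
            ← Real.inv_rpow hri, inv_div]
          congr 1
          rw [show (1:ℝ)/(1+δ) = 1 - θ by rw [hθdef]; field_simp; ring,
            Real.rpow_sub hik, Real.rpow_one]
        rw [h5] at h4
        exact h4
    have hCk : ∀ k, C i k ^ ((1:ℝ)/(1+δ)) ≤ C i k := by
      intro k
      rcases eq_or_lt_of_le (hCnn i k) with h0 | hik
      · rw [← h0, Real.zero_rpow (by positivity : (1:ℝ)/(1+δ) ≠ 0)]
      · have h1 : (1:ℝ) ≤ C i k := (hnorm i).1 k (ne_of_gt hik)
        calc C i k ^ ((1:ℝ)/(1+δ)) ≤ C i k ^ (1:ℝ) :=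
              Real.rpow_le_rpow_of_exponent_le h1 (by rw [div_le_one h1δ]; linarith)
          _ = C i k := Real.rpow_one _
    have hRrθ : (0:ℝ) ≤ (R i / r i) ^ θ :=
      Real.rpow_nonneg (div_nonneg (hRpos i).le (hr i).le) θ
    have hsum : R i ≤ γ * (R i / r i) ^ θ := by
      calc R i = ∑ k, C i k / r k ^ δ := hR i
        _ ≤ ∑ k, C i k ^ ((1:ℝ)/(1+δ)) * (R i / r i) ^ θ :=
            Finset.sum_le_sum fun k _ => hterm k
        _ = (∑ k, C i k ^ ((1:ℝ)/(1+δ))) * (R i / r i) ^ θ := by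
            rw [← Finset.sum_mul]
        _ ≤ γ * (R i / r i) ^ θ := by
            refine mul_le_mul_of_nonneg_right ?_ hRrθ
            calc ∑ k, C i k ^ ((1:ℝ)/(1+δ)) ≤ ∑ k, C i k :=
                  Finset.sum_le_sum fun k _ => hCk k
              _ ≤ γ := hrow i
    have hkey2 : r i ^ δ * (R i / r i) ^ θ = g ^ θ := by
      rw [Real.div_rpow (hRpos i).le (hr i).le, hgdef,
        Real.mul_rpow (Real.rpow_nonneg (hr i).le δ) (hRpos i).le,
        ← Real.rpow_mul (hr i).le,
        show δ * θ = δ - θ by rw [hθdef]; field_simp; ring,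
        Real.rpow_sub (hr i)]
      ring
    have h6 : g ≤ γ * g ^ θ := by
      calc g = r i ^ δ * R i := rfl
        _ ≤ r i ^ δ * (γ * (R i / r i) ^ θ) :=
            mul_le_mul_of_nonneg_left hsum (Real.rpow_nonneg (hr i).le δ)
        _ = γ * (r i ^ δ * (R i / r i) ^ θ) := by ring
        _ = γ * g ^ θ := by rw [hkey2]
    have h7 : g ^ ((1:ℝ)/(1+δ)) ≤ γ := by
      have h8 : g / g ^ θ ≤ γ := (div_le_iff₀ (Real.rpow_pos_of_pos hgpos θ)).2 h6
      calc g ^ ((1:ℝ)/(1+δ)) = g / g ^ θ := by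
            rw [show (1:ℝ)/(1+δ) = 1 - θ by rw [hθdef]; field_simp; ring,
              Real.rpow_sub hgpos, Real.rpow_one]
        _ ≤ γ := h8
    calc g = (g ^ ((1:ℝ)/(1+δ))) ^ (1+δ) := by
          rw [← Real.rpow_mul hgpos.le, one_div, inv_mul_cancel₀ (ne_of_gt h1δ),
            Real.rpow_one]
      _ ≤ γ ^ (1+δ) := Real.rpow_le_rpow (Real.rpow_nonneg hgpos.le _) h7 h1δ.le
  -- final assembly
  intro i j hij
  have hji : 0 < C j i := (hCsupp i j).1 hij
  have hCij1 : (1:ℝ) ≤ C i j := (hnorm i).1 j (ne_of_gt hij)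
  have hCji1 : (1:ℝ) ≤ C j i := (hnorm j).1 i (ne_of_gt hji)
  have hA : 0 < r i ^ δ * R i := mul_pos (Real.rpow_pos_of_pos (hr i) δ) (hRpos i)
  have hB : 0 < r j ^ δ * R j := mul_pos (Real.rpow_pos_of_pos (hr j) δ) (hRpos j)
  have hAB : 0 < r i ^ δ * R i * (r j ^ δ * R j) := mul_pos hA hB
  have hNum1 : (1:ℝ) ≤ C i j * C j i := by nlinarith
  -- upper bound on numerator
  have hCijU : C i j ≤ R i * r j ^ δ := (div_le_iff₀ (Real.rpow_pos_of_pos (hr j) δ)).1 (hterm0 i j)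
  have hCjiU : C j i ≤ R j * r i ^ δ := (div_le_iff₀ (Real.rpow_pos_of_pos (hr i) δ)).1 (hterm0 j i)
  have hNumU : C i j * C j i ≤ r i ^ δ * R i * (r j ^ δ * R j) := by
    calc C i j * C j i ≤ (R i * r j ^ δ) * (R j * r i ^ δ) :=
          mul_le_mul hCijU hCjiU (hCnn j i)
            (mul_nonneg (hRpos i).le (Real.rpow_nonneg (hr j).le δ))
      _ = r i ^ δ * R i * (r j ^ δ * R j) := by ring
  have hABU : r i ^ δ * R i * (r j ^ δ * R j) ≤ γ ^ (2 + 2*δ) := by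
    calc r i ^ δ * R i * (r j ^ δ * R j) ≤ γ ^ (1+δ) * γ ^ (1+δ) :=
          mul_le_mul (hg i) (hg j) hB.le (le_trans hA.le (hg i))
      _ = γ ^ (2 + 2*δ) := by
          rw [← Real.rpow_add hγ0]; congr 1; ring
  have hupper : C i j * C j i / (r i ^ δ * R i * (r j ^ δ * R j)) ≤ 1 :=
    (div_le_one hAB).2 hNumU
  have hlower : γ ^ (-2 - 2*δ) ≤ C i j * C j i / (r i ^ δ * R i * (r j ^ δ * R j)) := by
    have h1 : γ ^ (-2 - 2*δ) = 1 / γ ^ (2 + 2*δ) := by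
      rw [show (-2 - 2*δ : ℝ) = -(2 + 2*δ) by ring, Real.rpow_neg hγ0.le, one_div]
    rw [h1]
    exact div_le_div₀ (le_trans zero_le_one hNum1) hNum1 hAB hABU
  have hsame : R i * r i ^ δ * (R j * r j ^ δ) = r i ^ δ * R i * (r j ^ δ * R j) := by ring
  refine ⟨⟨hlower, hupper⟩, ?_, ?_⟩
  · rw [hsame]
    have hsq : γ ^ (-2 - 2*δ) = (γ ^ (-1 - δ)) ^ (2:ℕ) := by
      rw [sq, ← Real.rpow_add hγ0]; congr 1; ring
    calc γ ^ (-1 - δ) = Real.sqrt ((γ ^ (-1 - δ)) ^ (2:ℕ)) :=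
          (Real.sqrt_sq (Real.rpow_nonneg hγ0.le _)).symm
      _ = Real.sqrt (γ ^ (-2 - 2*δ)) := by rw [← hsq]
      _ ≤ _ := Real.sqrt_le_sqrt hlower
  · rw [hsame]
    calc Real.sqrt (C i j * C j i / (r i ^ δ * R i * (r j ^ δ * R j)))
        ≤ Real.sqrt 1 := Real.sqrt_le_sqrt hupper
      _ = 1 := Real.sqrt_one
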